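/- arXiv:1502.04924 — 3 statements merged into one kernel-verified Lean document; each statement's English description precedes it below -/
import Mathlib

section
/- Let R be a commutative ring and a a positive integer invertible in R. For a formal Laurent series f ∈ R((X)) (i.e. f = Σ_{n ≥ −N} c_n X^n), let σ_a(f) denote the Laurent series f((1+X)^a − 1), which is well defined since (1+X)^a − 1 = a·X·u(X) with u(X) ∈ R[[X]] of constant term 1 a unit of R[[X]]. Then Res_{X=0}( σ_a(f) / (1+X) ) = a^{−1} · Res_{X=0}( f / (1+X) ), where Res_{X=0} denotes the coefficient of X^{−1}. -/
open PowerSeries Finset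

/-- Composition `f(g)` of formal power series (valid when `g` has zero constant
coefficient). -/
noncomputable def pcomp {R : Type*} [CommRing R] (f g : PowerSeries R) : PowerSeries R :=
  PowerSeries.mk fun m => ∑ n ∈ Finset.range (m + 1),
    (PowerSeries.coeff (R := R) n f) * PowerSeries.coeff (R := R) m (g ^ n)

/-- The inverse `(1+X)⁻¹` in `R⟦X⟧` (constant coefficient of `1+X` is the unit `1`). -/
noncomputable def oneAddXInv (R : Type*) [CommRing R] : PowerSeries R :=
  PowerSeries.invOfUnit (1 + PowerSeries.X) 1

/-- The power series `w` with `(1+X)^a - 1 = X·w`; its constant coefficient is `a`. -/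
noncomputable def wSeries (R : Type*) [CommRing R] (a : ℕ) : PowerSeries R :=
  PowerSeries.mk fun n => PowerSeries.coeff (R := R) (n + 1) ((1 + PowerSeries.X) ^ a - 1)

/-- The inverse `((1+X)^a - 1)⁻¹ = X⁻¹ · w⁻¹` in the Laurent series field `R((X))`,
when `a` is invertible in `R` (so that `w` is a unit of `R⟦X⟧`). -/
noncomputable def subInv {R : Type*} [CommRing R] (a : ℕ) (hu : IsUnit ((a : ℕ) : R)) :
    LaurentSeries R :=
  (HahnSeries.single (-1 : ℤ) (1 : R)) *
    HahnSeries.ofPowerSeries ℤ R (PowerSeries.invOfUnit (wSeries R a) hu.unit)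

/-- The Laurent series `f = X^{-N}·g` (every Laurent series with finite principal
part is of this form). -/
noncomputable def laurentOf {R : Type*} [CommRing R] (N : ℕ) (g : PowerSeries R) :
    LaurentSeries R :=
  (HahnSeries.single (-(N : ℤ)) (1 : R)) * HahnSeries.ofPowerSeries ℤ R g

/-- `σ_a(f) = σ_a(g) · ((1+X)^a - 1)^{-N}` for `f = X^{-N}·g`. -/
noncomputable def sigmaLaurent {R : Type*} [CommRing R] (a : ℕ) (hu : IsUnit ((a : ℕ) : R))
    (N : ℕ) (g : PowerSeries R) : LaurentSeries R :=
  HahnSeries.ofPowerSeries ℤ R (pcomp g ((1 + PowerSeries.X) ^ a - 1)) * (subInv a hu) ^ N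

namespace Stmt6Aux

lemma inv_unique {M : Type*} [CommMonoid M] {x y z : M} (hy : x * y = 1) (hz : x * z = 1) :
    y = z := by
  calc y = y * (x * z) := by rw [hz, mul_one]
  _ = (x * y) * z := by rw [← mul_assoc, mul_comm y x]
  _ = z := by rw [hy, one_mul]

section basic

variable {S : Type*} [CommRing S]

lemma onePlusX_mul_oneAddXInv : (1 + X) * oneAddXInv S = 1 := by
  apply PowerSeries.mul_invOfUnit
  simp

lemma coeff_oneAddXInv (n : ℕ) : coeff (R := S) n (oneAddXInv S) = (-1 : S) ^ n := by
  induction n with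
  | zero =>
    simp [oneAddXInv, coeff_zero_eq_constantCoeff, constantCoeff_invOfUnit]
  | succ n ih =>
    have h := congrArg (coeff (R := S) (n + 1)) (onePlusX_mul_oneAddXInv (S := S))
    rw [add_mul, one_mul, map_add, coeff_succ_X_mul, ih, coeff_one, if_neg n.succ_ne_zero] at h
    rw [pow_succ]
    linear_combination h

lemma constCoeff_pow (a : ℕ) : constantCoeff (R := S) ((1 + X) ^ a) = 1 := by
  rw [map_pow]; simp

lemma coeff_one_pow (a : ℕ) : coeff (R := S) 1 ((1 + X) ^ a) = (a : S) := by
  induction a with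
  | zero => simp
  | succ a ih =>
    rw [pow_succ, mul_add, mul_one, map_add, ih, coeff_succ_mul_X 0,
      coeff_zero_eq_constantCoeff, constCoeff_pow]
    push_cast; ring

lemma X_mul_wSeries (a : ℕ) : (X : S⟦X⟧) * wSeries S a = (1 + X) ^ a - 1 := by
  ext n
  cases n with
  | zero =>
    simp [coeff_zero_eq_constantCoeff, map_sub, constCoeff_pow]
  | succ n =>
    rw [coeff_succ_X_mul]
    simp [wSeries]

lemma constantCoeff_wSeries (a : ℕ) : constantCoeff (R := S) (wSeries S a) = (a : S) := by
  have h : constantCoeff (R := S) (wSeries S a) = coeff (R := S) 1 ((1 + X) ^ a - 1) := by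
    simp [wSeries, ← coeff_zero_eq_constantCoeff]
  rw [h, map_sub, coeff_one_pow, coeff_one, if_neg one_ne_zero, sub_zero]

end basic

/-- The inverse `w⁻¹` of `wSeries` in `S⟦X⟧`, when `a` is a unit of `S`. -/
noncomputable def vS {S : Type*} [CommRing S] (a : ℕ) (hu : IsUnit ((a : ℕ) : S)) : S⟦X⟧ :=
  invOfUnit (wSeries S a) hu.unit

section withUnit

variable {S : Type*} [CommRing S] (a : ℕ) (hu : IsUnit ((a : ℕ) : S))

lemma w_mul_v : wSeries S a * vS a hu = 1 :=
  mul_invOfUnit _ _ (by rw [constantCoeff_wSeries]; exact hu.unit_spec.symm)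

lemma constantCoeff_v : constantCoeff (R := S) (vS a hu) = ((hu.unit⁻¹ : Sˣ) : S) :=
  constantCoeff_invOfUnit _ _

lemma u_mul_v : ((1 + X) ^ a - 1) * vS a hu = X := by
  rw [← X_mul_wSeries, mul_assoc, w_mul_v, mul_one]

lemma v_pow_w_pow {k j : ℕ} (hk : k ≤ j) :
    (vS a hu) ^ j * (wSeries S a) ^ k = (vS a hu) ^ (j - k) := by
  conv_lhs => rw [show j = (j - k) + k from (Nat.sub_add_cancel hk).symm]
  rw [pow_add, mul_assoc, ← mul_pow, mul_comm (vS a hu) (wSeries S a), w_mul_v, one_pow, mul_one]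

lemma deriv_pow_onePlusX (ha : 0 < a) :
    (d⁄dX S) ((1 + X : S⟦X⟧) ^ a) = (a : S⟦X⟧) * (1 + X) ^ (a - 1) := by
  rw [Derivation.leibniz_pow]
  have h1 : (d⁄dX S) (1 + X : S⟦X⟧) = 1 := by
    rw [map_add, derivative_X]
    simp
  rw [h1, smul_eq_mul, mul_one, nsmul_eq_mul]

lemma X_mul_dv (ha : 0 < a) :
    X * (d⁄dX S) (vS a hu)
      = vS a hu - (a : S⟦X⟧) * ((1 + X) ^ (a - 1) * (vS a hu) ^ 2) := by
  have hDu : (d⁄dX S) ((1 + X : S⟦X⟧) ^ a - 1) = (a : S⟦X⟧) * (1 + X) ^ (a - 1) := by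
    rw [map_sub, deriv_pow_onePlusX a ha, Derivation.map_one_eq_zero, sub_zero]
  have h1 := congrArg (d⁄dX S) (u_mul_v a hu)
  rw [Derivation.leibniz, derivative_X, hDu, smul_eq_mul, smul_eq_mul] at h1
  linear_combination (vS a hu) * h1 - ((d⁄dX S) (vS a hu)) * (u_mul_v a hu)

/-- The inverse of `(1+X)^a` in `S⟦X⟧`. -/
noncomputable def ES (S : Type*) [CommRing S] (a : ℕ) : S⟦X⟧ :=
  invOfUnit ((1 + X) ^ a) 1

lemma tE : (1 + X : S⟦X⟧) ^ a * ES S a = 1 :=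
  mul_invOfUnit _ _ (by rw [constCoeff_pow]; rfl)

lemma E_geom (K : ℕ) :
    ES S a = (∑ k ∈ range K, (-(X * wSeries S a)) ^ k)
      + (-(X * wSeries S a)) ^ K * ES S a := by
  have ht : (1 + X : S⟦X⟧) ^ a = 1 + X * wSeries S a := by rw [X_mul_wSeries]; ring
  have hE1 : ES S a = 1 - X * wSeries S a * ES S a := by
    have h := tE (S := S) a
    rw [ht] at h
    linear_combination h
  induction K with
  | zero => simp
  | succ K ih =>
    rw [sum_range_succ]
    calc ES S a = (∑ k ∈ range K, (-(X * wSeries S a)) ^ k)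
        + (-(X * wSeries S a)) ^ K * ES S a := ih
    _ = _ := by rw [pow_succ]; linear_combination ((-(X * wSeries S a)) ^ K) * hE1

end withUnit

section domain

variable {S : Type*} [CommRing S] [IsDomain S] [CharZero S] (a : ℕ) (hu : IsUnit ((a : ℕ) : S))

/-- Change-of-variables core: the residue of `u^{-j}·u'` is `δ_{j,1}`, over a
torsion-free coefficient ring. -/
lemma cov (ha : 0 < a) (j : ℕ) (hj : 1 ≤ j) :
    coeff (R := S) (j - 1) ((a : S⟦X⟧) * (1 + X) ^ (a - 1) * (vS a hu) ^ j)
      = if j = 1 then 1 else 0 := by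
  rcases j with _ | j
  · omega
  rcases j with _ | m
  · norm_num
    rw [constantCoeff_v]
    exact hu.mul_val_inv
  · rw [if_neg (by omega)]
    have key : X * (d⁄dX S) ((vS a hu) ^ (m + 1))
        + ((m + 1 : ℕ) : S⟦X⟧) * ((a : S⟦X⟧) * (1 + X) ^ (a - 1) * (vS a hu) ^ (m + 2))
        = ((m + 1 : ℕ) : S⟦X⟧) * (vS a hu) ^ (m + 1) := by
      rw [Derivation.leibniz_pow, Nat.add_sub_cancel, smul_eq_mul, nsmul_eq_mul]
      linear_combination (((m + 1 : ℕ) : S⟦X⟧) * (vS a hu) ^ m) * X_mul_dv a hu ha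
    have hc := congrArg (coeff (R := S) (m + 1)) key
    rw [map_add, coeff_succ_X_mul, coeff_derivative,
      ← map_natCast (C (R := S)) (m + 1), coeff_C_mul, coeff_C_mul] at hc
    have h0 : ((m + 1 : ℕ) : S) *
        coeff (R := S) (m + 1) ((a : S⟦X⟧) * (1 + X) ^ (a - 1) * (vS a hu) ^ (m + 2)) = 0 := by
      push_cast at hc ⊢
      linear_combination hc
    have hne : ((m + 1 : ℕ) : S) ≠ 0 := Nat.cast_ne_zero.mpr (Nat.succ_ne_zero m)
    have h2 := mul_eq_zero.mp h0
    rw [show m + 1 + 1 - 1 = m + 1 from rfl]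
    tauto

/-- The key residue computation, over a torsion-free coefficient ring. -/
lemma keyU (ha : 0 < a) (j : ℕ) (hj : 1 ≤ j) :
    (a : S) * coeff (R := S) (j - 1) ((vS a hu) ^ j * oneAddXInv S) = (-1 : S) ^ (j - 1) := by
  have hpow : (1 + X : S⟦X⟧) ^ (a - 1) * (1 + X) = (1 + X) ^ a := by
    rw [← pow_succ]
    congr 1
    omega
  have step : (a : S⟦X⟧) * ((vS a hu) ^ j * oneAddXInv S)
      = (a : S⟦X⟧) * (1 + X) ^ (a - 1) * (vS a hu) ^ j * ES S a := by
    calc (a : S⟦X⟧) * ((vS a hu) ^ j * oneAddXInv S)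
        = (a : S⟦X⟧) * ((vS a hu) ^ j * oneAddXInv S) * ((1 + X) ^ a * ES S a) := by
          rw [tE, mul_one]
      _ = (a : S⟦X⟧) * (1 + X) ^ (a - 1) * (vS a hu) ^ j * ES S a
            * ((1 + X) * oneAddXInv S) := by
          rw [← hpow]; ring
      _ = _ := by rw [onePlusX_mul_oneAddXInv, mul_one]
  have hstart : (a : S) * coeff (R := S) (j - 1) ((vS a hu) ^ j * oneAddXInv S)
      = coeff (R := S) (j - 1) ((a : S⟦X⟧) * (1 + X) ^ (a - 1) * (vS a hu) ^ j * ES S a) := by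
    rw [← coeff_C_mul, map_natCast, ← step]
  rw [hstart, E_geom a j, mul_add, map_add]
  have hzero : coeff (R := S) (j - 1) ((a : S⟦X⟧) * (1 + X) ^ (a - 1) * (vS a hu) ^ j
      * ((-(X * wSeries S a)) ^ j * ES S a)) = 0 := by
    have hX : (a : S⟦X⟧) * (1 + X) ^ (a - 1) * (vS a hu) ^ j
          * ((-(X * wSeries S a)) ^ j * ES S a)
        = X ^ j * ((-1 : S⟦X⟧) ^ j * (wSeries S a) ^ j
            * ((a : S⟦X⟧) * (1 + X) ^ (a - 1) * (vS a hu) ^ j * ES S a)) := by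
      rw [neg_pow, mul_pow]
      ring
    rw [hX, coeff_X_pow_mul', if_neg (by omega)]
  rw [hzero, add_zero, mul_sum, map_sum]
  have hterm : ∀ k ∈ range j,
      coeff (R := S) (j - 1) ((a : S⟦X⟧) * (1 + X) ^ (a - 1) * (vS a hu) ^ j
          * (-(X * wSeries S a)) ^ k)
        = (-1 : S) ^ k * (if j - k = 1 then 1 else 0) := by
    intro k hk
    have hk' : k < j := mem_range.mp hk
    have h1 : (a : S⟦X⟧) * (1 + X) ^ (a - 1) * (vS a hu) ^ j * (-(X * wSeries S a)) ^ k
        = C (R := S) ((-1 : S) ^ k)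
            * (X ^ k * ((a : S⟦X⟧) * (1 + X) ^ (a - 1) * (vS a hu) ^ (j - k))) := by
      rw [← v_pow_w_pow a hu (le_of_lt hk'), neg_pow, mul_pow]
      simp only [map_pow, map_neg, map_one]
      ring
    rw [h1, coeff_C_mul, coeff_X_pow_mul', if_pos (by omega)]
    have hcov := cov a hu ha (j - k) (by omega)
    rw [show j - k - 1 = j - 1 - k from by omega] at hcov
    rw [hcov]
  rw [sum_congr rfl hterm]
  rw [Finset.sum_eq_single (j - 1)]
  · rw [if_pos (by omega), mul_one]
  · intro k hk hkne
    rw [if_neg (by rw [mem_range] at hk; omega), mul_zero]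
  · intro hnot
    rw [mem_range] at hnot
    omega

end domain

section transfer

variable {R : Type*} [CommRing R] (a : ℕ) (hu : IsUnit ((a : ℕ) : R))

/-- The key residue computation over an arbitrary commutative ring in which `a`
is invertible, by base change from `ℤ[1/a]`. -/
lemma keyR (ha : 0 < a) (j : ℕ) (hj : 1 ≤ j) :
    coeff (R := R) (j - 1) ((vS a hu) ^ j * oneAddXInv R)
      = ((hu.unit⁻¹ : Rˣ) : R) * (-1 : R) ^ (j - 1) := by
  set U := Localization.Away ((a : ℕ) : ℤ) with hUdef
  have haz : (((a : ℕ) : ℤ)) ≠ 0 := by exact_mod_cast ha.ne'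
  have hle : Submonoid.powers (((a : ℕ) : ℤ)) ≤ nonZeroDivisors ℤ :=
    powers_le_nonZeroDivisors_of_noZeroDivisors haz
  haveI : IsDomain U := IsLocalization.isDomain_localization hle
  haveI : CharZero U := by
    have hinj : Function.Injective (algebraMap ℤ U) := IsLocalization.injective U hle
    exact charZero_of_injective_algebraMap hinj
  have hUa : IsUnit ((a : ℕ) : U) := by
    have h1 : ((a : ℕ) : U) = algebraMap ℤ U (((a : ℕ) : ℤ)) :=
      (map_natCast (algebraMap ℤ U) a).symm
    rw [h1]
    exact IsLocalization.Away.algebraMap_isUnit _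
  have hfa : IsUnit ((Int.castRingHom R) (((a : ℕ) : ℤ))) := by
    rw [map_natCast (Int.castRingHom R) a]
    exact hu
  set φ : U →+* R := Localization.awayLift (Int.castRingHom R) ((a : ℕ) : ℤ) hfa with hφ
  have hmw : PowerSeries.map φ (wSeries U a) = wSeries R a := by
    ext n
    rw [PowerSeries.coeff_map]
    simp only [wSeries, coeff_mk]
    rw [← PowerSeries.coeff_map]
    congr 1
    rw [map_sub, map_pow, map_add, map_one, PowerSeries.map_X]
  have hmv : PowerSeries.map φ (vS a hUa) = vS a hu := by
    apply inv_unique (x := wSeries R a)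
    · rw [← hmw, ← map_mul, w_mul_v, map_one]
    · exact w_mul_v a hu
  have hmq : PowerSeries.map φ (oneAddXInv U) = oneAddXInv R := by
    apply inv_unique (x := (1 + X : R⟦X⟧))
    · have h2 : (1 + X : R⟦X⟧) = PowerSeries.map φ (1 + X) := by
        rw [map_add, map_one, PowerSeries.map_X]
      rw [h2, ← map_mul, onePlusX_mul_oneAddXInv, map_one]
    · exact onePlusX_mul_oneAddXInv
  have happ := congrArg φ (keyU a hUa ha j hj)
  rw [map_mul, map_natCast, ← PowerSeries.coeff_map, map_mul, map_pow, hmv, hmq,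
    map_pow, map_neg, map_one] at happ
  have hinv : ((hu.unit⁻¹ : Rˣ) : R) * ((a : ℕ) : R) = 1 := hu.val_inv_mul
  linear_combination ((hu.unit⁻¹ : Rˣ) : R) * happ
    - coeff (R := R) (j - 1) ((vS a hu) ^ j * oneAddXInv R) * hinv

end transfer

section main

variable {R : Type*} [CommRing R]

/-- The main identity at the level of power series coefficients. -/
lemma main_ps (a : ℕ) (hu : IsUnit ((a : ℕ) : R)) (ha : 0 < a) (M : ℕ) (g : R⟦X⟧) :
    coeff (R := R) M (pcomp g ((1 + X) ^ a - 1) * (vS a hu) ^ (M + 1) * oneAddXInv R)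
      = ((hu.unit⁻¹ : Rˣ) : R) * coeff (R := R) M (g * oneAddXInv R) := by
  set v := vS a hu with hv
  set q := oneAddXInv R with hq
  set u : R⟦X⟧ := (1 + X) ^ a - 1 with hudef
  have hXw : (X : R⟦X⟧) * wSeries R a = u := X_mul_wSeries a
  rw [mul_assoc]
  set h : R⟦X⟧ := v ^ (M + 1) * q with hh
  rw [coeff_mul, Finset.Nat.sum_antidiagonal_eq_sum_range_succ_mk]
  have e1 : ∀ k ∈ range (M + 1), coeff (R := R) k (pcomp g u) * coeff (R := R) (M - k) h
      = ∑ n ∈ range (M + 1), coeff (R := R) n g * coeff (R := R) k (u ^ n) * coeff (R := R) (M - k) h := by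
    intro k hk
    have h2 : coeff (R := R) k (pcomp g u) = ∑ n ∈ range (M + 1), coeff (R := R) n g * coeff (R := R) k (u ^ n) := by
      rw [pcomp, coeff_mk]
      apply Finset.sum_subset (Finset.range_subset_range.mpr (by rw [mem_range] at hk; omega))
      intro n hn hn2
      have hkn : k < n := by simp only [mem_range, not_lt] at hn2; omega
      have hz : coeff (R := R) k (u ^ n) = 0 := by
        rw [← hXw, mul_pow, coeff_X_pow_mul', if_neg (by omega)]
      rw [hz, mul_zero]
    rw [h2, sum_mul]
  rw [Finset.sum_congr rfl e1, Finset.sum_comm]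
  have e3 : ∀ n ∈ range (M + 1),
      (∑ k ∈ range (M + 1), coeff (R := R) n g * coeff (R := R) k (u ^ n) * coeff (R := R) (M - k) h)
      = coeff (R := R) n g * (((hu.unit⁻¹ : Rˣ) : R) * (-1 : R) ^ (M - n)) := by
    intro n hn
    have hn' : n ≤ M := by rw [mem_range] at hn; omega
    have e4 : ∑ k ∈ range (M + 1), coeff (R := R) k (u ^ n) * coeff (R := R) (M - k) h
        = coeff (R := R) M (u ^ n * h) := by
      rw [coeff_mul, Finset.Nat.sum_antidiagonal_eq_sum_range_succ_mk]
    have e5 : u ^ n * h = X ^ n * (v ^ (M + 1 - n) * q) := by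
      rw [hh, ← hXw, mul_pow, ← v_pow_w_pow a hu (show n ≤ M + 1 by omega)]
      ring
    calc ∑ k ∈ range (M + 1), coeff (R := R) n g * coeff (R := R) k (u ^ n) * coeff (R := R) (M - k) h
        = coeff (R := R) n g * ∑ k ∈ range (M + 1), coeff (R := R) k (u ^ n) * coeff (R := R) (M - k) h := by
          rw [mul_sum]
          exact Finset.sum_congr rfl fun k _ => by ring
      _ = coeff (R := R) n g * coeff (R := R) M (u ^ n * h) := by rw [e4]
      _ = _ := by
          rw [e5, coeff_X_pow_mul', if_pos hn']
          have hk2 := keyR a hu ha (M + 1 - n) (by omega)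
          rw [show M + 1 - n - 1 = M - n from by omega] at hk2
          rw [hk2]
  rw [Finset.sum_congr rfl e3]
  rw [coeff_mul, Finset.Nat.sum_antidiagonal_eq_sum_range_succ_mk, mul_sum]
  exact Finset.sum_congr rfl fun n _ => by rw [coeff_oneAddXInv]; ring

lemma hahn_coeff_ofPS_negone (h : R⟦X⟧) :
    (HahnSeries.ofPowerSeries ℤ R h).coeff (-1) = 0 := by
  rw [HahnSeries.ofPowerSeries_apply]
  apply HahnSeries.embDomain_notin_image_support
  rintro ⟨n, -, hn⟩
  simp only [Nat.castOrderEmbedding_apply] at hn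
  omega

lemma hahn_coeff_single_ofPS (N : ℕ) (hN : 0 < N) (h : R⟦X⟧) :
    (HahnSeries.single (-(N : ℤ)) (1 : R) * HahnSeries.ofPowerSeries ℤ R h).coeff (-1)
      = coeff (R := R) (N - 1) h := by
  have e : (-1 : ℤ) = ((N - 1 : ℕ) : ℤ) + (-(N : ℤ)) := by
    rw [Nat.cast_sub (by omega : 1 ≤ N)]
    push_cast
    ring
  rw [e, HahnSeries.coeff_single_mul_add, one_mul, HahnSeries.ofPowerSeries_apply_coeff]

end main

end Stmt6Aux

open Stmt6Aux in
/-- Change-of-variables formula for the formal residue: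
`Res_{X=0}(σ_a(f)/(1+X)) = a⁻¹ · Res_{X=0}(f/(1+X))` for any Laurent series
`f = X^{-N}·g` with finite principal part, where the residue is the coefficient
of `X^{-1}`. -/
theorem stmt6 {R : Type*} [CommRing R] (a : ℕ) (ha : 0 < a) (hu : IsUnit ((a : ℕ) : R))
    (N : ℕ) (g : PowerSeries R) :
    (sigmaLaurent a hu N g * HahnSeries.ofPowerSeries ℤ R (oneAddXInv R)).coeff (-1) =
      ((hu.unit⁻¹ : Rˣ) : R) *
        (laurentOf N g * HahnSeries.ofPowerSeries ℤ R (oneAddXInv R)).coeff (-1) := by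
  have hv : PowerSeries.invOfUnit (wSeries R a) hu.unit = vS a hu := rfl
  have hL : sigmaLaurent a hu N g * HahnSeries.ofPowerSeries ℤ R (oneAddXInv R)
      = HahnSeries.single (-(N : ℤ)) (1 : R) *
          HahnSeries.ofPowerSeries ℤ R
            (pcomp g ((1 + X) ^ a - 1) * (vS a hu) ^ N * oneAddXInv R) := by
    rw [sigmaLaurent, subInv, hv, mul_pow, HahnSeries.single_pow, one_pow,
      show N • (-1 : ℤ) = -(N : ℤ) from by simp, map_mul, map_mul, map_pow]
    ring
  have hR : laurentOf N g * HahnSeries.ofPowerSeries ℤ R (oneAddXInv R)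
      = HahnSeries.single (-(N : ℤ)) (1 : R) *
          HahnSeries.ofPowerSeries ℤ R (g * oneAddXInv R) := by
    rw [laurentOf, map_mul]
    ring
  rw [hL, hR]
  rcases Nat.eq_zero_or_pos N with hN | hN
  · subst hN
    simp only [Nat.cast_zero, neg_zero]
    rw [HahnSeries.single_zero_one, one_mul, one_mul,
      hahn_coeff_ofPS_negone, hahn_coeff_ofPS_negone, mul_zero]
  · obtain ⟨M, rfl⟩ : ∃ M, N = M + 1 := ⟨N - 1, by omega⟩
    rw [hahn_coeff_single_ofPS _ (by omega), hahn_coeff_single_ofPS _ (by omega)]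
    rw [show M + 1 - 1 = M from rfl]
    exact main_ps a hu ha M g
end

section
/- Let R be a commutative ring and D₁, D₂ be R-modules, each equipped with commuting R-linear endomorphisms φ_i, γ_i (i = 1,2). Put D := D₁ ⊗_R D₂ with φ := φ₁ ⊗ φ₂ and γ := γ₁ ⊗ γ₂. For an R-module E with commuting endomorphisms φ_E, γ_E, define H¹ of the complex C(E) : E → E ⊕ E → E (maps x ↦ ((γ_E−1)x, (φ_E−1)x) and (x,y) ↦ (φ_E−1)x − (γ_E−1)y) and H² := E / im((φ_E−1) ⊕ (1−γ_E)). Then the formula ((x₁,y₁), (x₂,y₂)) ↦ x₁ ⊗ γ₂(y₂) − y₁ ⊗ φ₂(x₂) maps pairs of 1-cocycles of C(D₁) × C(D₂) into D, is compatible with 1-coboundaries in each variable modulo 2-coboundaries of C(D), and hence induces a well-defined R-bilinear cup product pairing H¹(C(D₁)) × H¹(C(D₂)) → H²(C(D)). -/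
open TensorProduct

/-- The explicit cup product formula
`((x₁,y₁), (x₂,y₂)) ↦ x₁ ⊗ γ₂(y₂) − y₁ ⊗ φ₂(x₂)` on the Herr complexes:
it sends a coboundary paired with a cocycle (in either order) into the
2-coboundaries of `D = D₁ ⊗ D₂`, and hence induces a well-defined bilinear
pairing `H¹(C(D₁)) × H¹(C(D₂)) → H²(C(D))`. Here a 1-cocycle of `C(E)` is a
pair `(x,y)` with `(φ_E−1)x = (γ_E−1)y`, a 1-coboundary is `((γ_E−1)z, (φ_E−1)z)`,
and `H² = E / im((φ_E−1) ⊕ (1−γ_E))`. -/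
theorem stmt8 {R D1 D2 : Type*} [CommRing R]
    [AddCommGroup D1] [Module R D1] [AddCommGroup D2] [Module R D2]
    (φ1 γ1 : D1 →ₗ[R] D1) (φ2 γ2 : D2 →ₗ[R] D2)
    (h1 : ∀ x, φ1 (γ1 x) = γ1 (φ1 x)) (h2 : ∀ x, φ2 (γ2 x) = γ2 (φ2 x)) :
    let B2 : Submodule R (D1 ⊗[R] D2) :=
      LinearMap.range (TensorProduct.map φ1 φ2 - LinearMap.id) ⊔
        LinearMap.range (LinearMap.id - TensorProduct.map γ1 γ2)
    let cup : D1 × D1 → D2 × D2 → D1 ⊗[R] D2 :=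
      fun c1 c2 => c1.1 ⊗ₜ[R] γ2 c2.2 - c1.2 ⊗ₜ[R] φ2 c2.1
    (∀ (z : D1) (c2 : D2 × D2), φ2 c2.1 - c2.1 = γ2 c2.2 - c2.2 →
        cup (γ1 z - z, φ1 z - z) c2 ∈ B2) ∧
    (∀ c1 : D1 × D1, φ1 c1.1 - c1.1 = γ1 c1.2 - c1.2 → ∀ z : D2,
        cup c1 (γ2 z - z, φ2 z - z) ∈ B2) ∧
    (∀ c1 c1' : D1 × D1, ∀ c2 c2' : D2 × D2,
        φ1 c1.1 - c1.1 = γ1 c1.2 - c1.2 → φ1 c1'.1 - c1'.1 = γ1 c1'.2 - c1'.2 →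
        φ2 c2.1 - c2.1 = γ2 c2.2 - c2.2 → φ2 c2'.1 - c2'.1 = γ2 c2'.2 - c2'.2 →
        (∃ z : D1, c1 - c1' = (γ1 z - z, φ1 z - z)) →
        (∃ w : D2, c2 - c2' = (γ2 w - w, φ2 w - w)) →
        cup c1 c2 - cup c1' c2' ∈ B2) := by
  intro B2 cup
  have mem_of_rep : ∀ (v : D1 ⊗[R] D2) (a b : D1 ⊗[R] D2),
      v = (TensorProduct.map φ1 φ2 - (LinearMap.id : D1 ⊗[R] D2 →ₗ[R] D1 ⊗[R] D2)) a +
        ((LinearMap.id : D1 ⊗[R] D2 →ₗ[R] D1 ⊗[R] D2) - TensorProduct.map γ1 γ2) b → v ∈ B2 := by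
    intro v a b hv
    rw [hv]
    exact Submodule.add_mem _ (Submodule.mem_sup_left ⟨a, rfl⟩)
      (Submodule.mem_sup_right ⟨b, rfl⟩)
  have p1 : ∀ (z : D1) (c2 : D2 × D2), φ2 c2.1 - c2.1 = γ2 c2.2 - c2.2 →
      cup (γ1 z - z, φ1 z - z) c2 ∈ B2 := by
    intro z c2 hc2
    refine mem_of_rep _ (-(z ⊗ₜ c2.1)) (-(z ⊗ₜ c2.2)) ?_
    have key : z ⊗ₜ[R] φ2 c2.1 - z ⊗ₜ[R] c2.1 = z ⊗ₜ[R] γ2 c2.2 - z ⊗ₜ[R] c2.2 := by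
      rw [← tmul_sub, ← tmul_sub, hc2]
    simp only [cup, LinearMap.sub_apply, LinearMap.id_apply, map_neg,
      TensorProduct.map_tmul, sub_tmul]
    rw [← sub_eq_zero] at key ⊢
    rw [← key]; abel
  have p2 : ∀ c1 : D1 × D1, φ1 c1.1 - c1.1 = γ1 c1.2 - c1.2 → ∀ z : D2,
      cup c1 (γ2 z - z, φ2 z - z) ∈ B2 := by
    intro c1 hc1 z
    refine mem_of_rep _ (c1.1 ⊗ₜ γ2 z) (c1.2 ⊗ₜ φ2 z) ?_
    have key : γ1 c1.2 ⊗ₜ[R] (γ2 (φ2 z)) - c1.2 ⊗ₜ[R] (γ2 (φ2 z)) =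
        φ1 c1.1 ⊗ₜ[R] (γ2 (φ2 z)) - c1.1 ⊗ₜ[R] (γ2 (φ2 z)) := by
      rw [← sub_tmul, ← sub_tmul, ← hc1]
    simp only [cup, map_sub, tmul_sub, LinearMap.sub_apply, LinearMap.id_apply,
      TensorProduct.map_tmul, h2]
    rw [← sub_eq_zero] at key ⊢
    rw [← key]; abel
  refine ⟨p1, p2, ?_⟩
  rintro c1 c1' c2 c2' hc1 hc1' hc2 hc2' ⟨z, hz⟩ ⟨w, hw⟩
  have hz1 : c1.1 - c1'.1 = γ1 z - z := congrArg Prod.fst hz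
  have hz2 : c1.2 - c1'.2 = φ1 z - z := congrArg Prod.snd hz
  have hw1 : c2.1 - c2'.1 = γ2 w - w := congrArg Prod.fst hw
  have hw2 : c2.2 - c2'.2 = φ2 w - w := congrArg Prod.snd hw
  have split : cup c1 c2 - cup c1' c2' =
      cup (c1.1 - c1'.1, c1.2 - c1'.2) c2 + cup c1' (c2.1 - c2'.1, c2.2 - c2'.2) := by
    simp only [cup, map_sub, sub_tmul, tmul_sub]
    abel
  rw [split, hz1, hz2, hw1, hw2]
  exact Submodule.add_mem _ (p1 z c2 hc2) (p2 c1' hc1' w)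
end

section
/- Let R be a commutative ring, G a group, Γ an abelian group, π : G → Γ a group homomorphism, and T an R[G]-module that is finite free as R-module with dual T^∨ := Hom_R(T, R) carrying the contragredient G-action. Let ι : R[Γ] → R[Γ] be the R-algebra involution with ι(γ) = γ^{−1}. For an R[Γ]-module M let M^ι be M with R[Γ]-action twisted through ι, and define Dfm(N) := N ⊗_R R[Γ] with g·(x⊗λ) = gx ⊗ π(g)^{−1}λ as before. Then the map Dfm(T^∨)^ι → Hom_{R[Γ]}(Dfm(T), R[Γ]), x ⊗ λ ↦ ( y ⊗ λ′ ↦ ι(λ)·λ′·x(y) ), is a well-defined isomorphism of R[Γ]-modules, and it is G-equivariant for the natural (contragredient) G-action on Hom_{R[Γ]}(Dfm(T), R[Γ]). -/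
open TensorProduct

/-- The involution `ι` of the group algebra `R[Γ]` with `ι(γ) = γ⁻¹`. -/
noncomputable def iotaInv {R Γ : Type*} [CommRing R] [CommGroup Γ]
    (lam : MonoidAlgebra R Γ) : MonoidAlgebra R Γ :=
  MonoidAlgebra.ofCoeff (Finsupp.equivMapDomain (Equiv.inv Γ) lam.coeff)

lemma iotaInv_eq_domCongr {R Γ : Type*} [CommRing R] [CommGroup Γ]
    (lam : MonoidAlgebra R Γ) :
    iotaInv lam = MonoidAlgebra.domCongr R R (MulEquiv.inv Γ) lam := by
  ext γ
  simp [iotaInv, MonoidAlgebra.domCongr, Finsupp.equivMapDomain_eq_mapDomain]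
  rfl

lemma iotaInv_mul {R Γ : Type*} [CommRing R] [CommGroup Γ]
    (a b : MonoidAlgebra R Γ) : iotaInv (a * b) = iotaInv a * iotaInv b := by
  simp only [iotaInv_eq_domCongr, map_mul]

lemma iotaInv_iotaInv {R Γ : Type*} [CommRing R] [CommGroup Γ]
    (a : MonoidAlgebra R Γ) : iotaInv (iotaInv a) = a := by
  simp only [iotaInv]
  ext γ
  simp

/-- The canonical isomorphism `Dfm(T^∨)^ι ≅ Hom_{R[Γ]}(Dfm(T), R[Γ])`:
the map `x ⊗ λ ↦ (y ⊗ λ′ ↦ ι(λ)·λ′·x(y))` is a well-defined isomorphism of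
`R[Γ]`-modules (from the `ι`-twisted module, i.e. `e(ι(a)·m) = a·e(m)`), and it
is `G`-equivariant for the contragredient `G`-actions. Here
`Dfm(N) = R[Γ] ⊗_R N` carries the `G`-action `g·(λ ⊗ x) = π(g)⁻¹λ ⊗ gx`, and
the contragredient action on the Hom is `(g·F)(m) = F(g⁻¹·m)`. -/
theorem stmt19 {R : Type*} [CommRing R] {G : Type*} [Group G] {Γ : Type*} [CommGroup Γ]
    (π : G →* Γ) {T : Type*} [AddCommGroup T] [Module R T]
    [Module.Free R T] [Module.Finite R T]
    (ρ : G →* (T →ₗ[R] T)) :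
    ∃ e : (MonoidAlgebra R Γ ⊗[R] Module.Dual R T) ≃+
        ((MonoidAlgebra R Γ ⊗[R] T) →ₗ[MonoidAlgebra R Γ] MonoidAlgebra R Γ),
      (∀ (lam mu : MonoidAlgebra R Γ) (x : Module.Dual R T) (y : T),
        e (lam ⊗ₜ[R] x) (mu ⊗ₜ[R] y) = x y • (iotaInv lam * mu)) ∧
      (∀ (a : MonoidAlgebra R Γ) (m : MonoidAlgebra R Γ ⊗[R] Module.Dual R T),
        e (iotaInv a • m) = a • e m) ∧
      (∀ (g : G) (lam mu : MonoidAlgebra R Γ) (x : Module.Dual R T) (y : T),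
        e ((MonoidAlgebra.single ((π g)⁻¹) (1 : R) * lam) ⊗ₜ[R] (x ∘ₗ ρ g⁻¹))
            (mu ⊗ₜ[R] y) =
          e (lam ⊗ₜ[R] x)
            ((MonoidAlgebra.single (π g) (1 : R) * mu) ⊗ₜ[R] ρ g⁻¹ y)) := by
  classical
  set A := MonoidAlgebra R Γ with hA
  -- step 1: twist the first factor by ι
  let e₁ : (A ⊗[R] Module.Dual R T) ≃ₗ[R] (A ⊗[R] Module.Dual R T) :=
    TensorProduct.congr
      (MonoidAlgebra.domCongr R R (MulEquiv.inv Γ)).toLinearEquiv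
      (LinearEquiv.refl R (Module.Dual R T))
  -- step 2: swap the factors
  let e₂ := TensorProduct.comm R A (Module.Dual R T)
  -- step 3: dual ⊗ A ≃ Hom(T, A)
  let e₃ := dualTensorHomEquiv R T A
  -- step 4: base change adjunction
  let e₄ := LinearMap.liftBaseChangeEquiv (R := R) (M := T) (N := A) A
  let e : (A ⊗[R] Module.Dual R T) ≃+ ((A ⊗[R] T) →ₗ[A] A) :=
    ((e₁.trans (e₂.trans e₃)).toAddEquiv.trans e₄.toAddEquiv)
  have hkey : ∀ (lam mu : A) (x : Module.Dual R T) (y : T),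
      e (lam ⊗ₜ[R] x) (mu ⊗ₜ[R] y) = x y • (iotaInv lam * mu) := by
    intro lam mu x y
    show e₄ (e₃ (e₂ (e₁ (lam ⊗ₜ[R] x)))) (mu ⊗ₜ[R] y) = _
    have h1 : e₁ (lam ⊗ₜ[R] x) = (iotaInv lam) ⊗ₜ[R] x := by
      rw [iotaInv_eq_domCongr]; rfl
    rw [h1]
    have h2 : e₂ ((iotaInv lam) ⊗ₜ[R] x) = x ⊗ₜ[R] (iotaInv lam) := rfl
    rw [h2]
    have h3 : e₃ (x ⊗ₜ[R] (iotaInv lam)) = dualTensorHom R T A (x ⊗ₜ[R] (iotaInv lam)) := by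
      simp [e₃]
    rw [h3]
    show mu • (dualTensorHom R T A (x ⊗ₜ[R] iotaInv lam)) y = _
    rw [dualTensorHom_apply, smul_comm, smul_eq_mul, mul_comm]
  refine ⟨e, hkey, ?_, ?_⟩
  · intro a m
    induction m using TensorProduct.induction_on with
    | zero => rw [smul_zero, AddEquiv.map_zero, smul_zero]
    | add m₁ m₂ h₁ h₂ => rw [smul_add, AddEquiv.map_add, h₁, h₂, AddEquiv.map_add, smul_add]
    | tmul lam x =>
      have hsm : iotaInv a • (lam ⊗ₜ[R] x) = (iotaInv a * lam) ⊗ₜ[R] x := rfl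
      rw [hsm]
      apply LinearMap.ext
      intro m
      induction m using TensorProduct.induction_on with
      | zero => simp
      | add m₁ m₂ h₁ h₂ => simp_all [mul_add]
      | tmul mu y =>
        rw [hkey, LinearMap.smul_apply, hkey, iotaInv_mul, iotaInv_iotaInv,
          smul_eq_mul, mul_smul_comm, mul_assoc]
  · intro g lam mu x y
    rw [hkey, hkey]
    have : (x ∘ₗ ρ g⁻¹) y = x ((ρ g⁻¹) y) := rfl
    rw [this, iotaInv_mul]
    congr 1
    have hs : iotaInv (MonoidAlgebra.single ((π g)⁻¹) (1 : R)) =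
        MonoidAlgebra.single (π g) (1 : R) := by
      simp [iotaInv, Finsupp.equivMapDomain_single]
    rw [hs]
    ring
end
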